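/- For every p ∈ [1,∞] and every f : T → ℂ one has ‖∇f‖_{L^p(μ)} ≤ ‖Df‖_{L^p(μ)} ≤ (1+q)·‖∇f‖_{L^p(μ)}, and moreover ‖∇f‖_{L^{1,∞}(μ)} ≤ ‖Df‖_{L^{1,∞}(μ)} ≤ (1+q)²·‖∇f‖_{L^{1,∞}(μ)}. -/

import Mathlib

open MeasureTheory ENNReal Set Function
open scoped NNReal ENNReal Classical

noncomputable section

/-- A homogeneous tree of degree `q+1` with a distinguished end (mythical ancestor),
encoded through its graph distance `dist`, horocyclic level function `level`,
and predecessor map `pred`. -/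
structure FlowTree (q : ℕ) where
  V : Type
  countableV : Countable V
  dist : V → V → ℕ
  level : V → ℤ
  pred : V → V
  dist_self : ∀ x, dist x x = 0
  eq_of_dist_eq_zero : ∀ x y, dist x y = 0 → x = y
  dist_comm : ∀ x y, dist x y = dist y x
  dist_triangle : ∀ x y z, dist x z ≤ dist x y + dist y z
  level_pred : ∀ x, level (pred x) = level x + 1
  succ_finite : ∀ x, Set.Finite {y | pred y = x}
  succ_card : ∀ x, Nat.card {y // pred y = x} = q
  dist_le : ∀ (x y : V) (n m : ℕ), pred^[n] x = pred^[m] y → dist x y ≤ n + m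
  dist_spec : ∀ x y, ∃ n m : ℕ, pred^[n] x = pred^[m] y ∧ n + m = dist x y

namespace FlowTree

variable {q : ℕ} (S : FlowTree q)

/-- The canonical flow measure weight `μ(x) = q^{ℓ(x)}`, as an extended nonnegative real. -/
def w (x : S.V) : ℝ≥0∞ := (q : ℝ≥0∞) ^ ((S.level x : ℤ) : ℝ)

/-- The canonical flow measure weight `μ(x) = q^{ℓ(x)}`, as a real number. -/
def wR (x : S.V) : ℝ := (q : ℝ) ^ (S.level x)

/-- The canonical flow measure of a set `E ⊆ T`. -/
def muS (E : Set S.V) : ℝ≥0∞ := ∑' x : E, S.w x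

/-- The `L^p(μ)` (quasi)norm, `p ∈ [1,∞]`. -/
def lpNorm (p : ℝ≥0∞) {E : Type*} [NNNorm E] (f : S.V → E) : ℝ≥0∞ :=
  if p = ∞ then ⨆ x, (‖f x‖₊ : ℝ≥0∞)
  else (∑' x, (‖f x‖₊ : ℝ≥0∞) ^ p.toReal * S.w x) ^ (1 / p.toReal)

/-- The weak `L^{1,∞}(μ)` quasinorm `sup_{λ>0} λ · μ({|f| > λ})`. -/
def wkNorm {E : Type*} [NNNorm E] (f : S.V → E) : ℝ≥0∞ :=
  ⨆ t : ℝ≥0, (t : ℝ≥0∞) * S.muS {x | t < ‖f x‖₊}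

/-- `Σf(x) = f(𝔭(x))`. -/
def sig (f : S.V → ℂ) : S.V → ℂ := fun x => f (S.pred x)

/-- `Σ*f(x) = (1/q) Σ_{y ∈ succ(x)} f(y)`. -/
def sigStar (f : S.V → ℂ) : S.V → ℂ :=
  fun x => (q : ℂ)⁻¹ * ∑' y : {y | S.pred y = x}, f y.1

/-- The flow gradient `∇ = id − Σ`. -/
def grad (f : S.V → ℂ) : S.V → ℂ := fun x => f x - f (S.pred x)

/-- `∇* = id − Σ*`. -/
def gradStar (f : S.V → ℂ) : S.V → ℂ := fun x => f x - S.sigStar f x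

/-- The modulus of the gradient `Df(x) = Σ_{y ∼ x} |f(x) − f(y)|`. -/
def Dmod (f : S.V → ℂ) : S.V → ℝ :=
  fun x => ∑' y : {y | S.dist x y = 1}, ‖f x - f y.1‖

/-- `Σ̃_n = Σ^n` for `n ≥ 0` and `(Σ*)^{−n}` for `n < 0`. -/
def sigTilde (n : ℤ) (f : S.V → ℂ) : S.V → ℂ :=
  if 0 ≤ n then (S.sig)^[n.toNat] f else (S.sigStar)^[(-n).toNat] f

/-- `Σ*` acting on real-valued functions. -/
def sigStarR (f : S.V → ℝ) : S.V → ℝ :=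
  fun x => (q : ℝ)⁻¹ * ∑' y : {y | S.pred y = x}, f y.1

/-- The flow Laplacian `𝓛 = id − (Σ + Σ*)/2`, acting pointwise on real functions. -/
def lapR (f : S.V → ℝ) : S.V → ℝ :=
  fun x => f x - (f (S.pred x) + S.sigStarR f x) / 2

/-- `δ_y/μ(y)`, the normalized delta at `y`. -/
def deltaMu (y : S.V) : S.V → ℝ := fun z => if z = y then (S.wR y)⁻¹ else 0

/-- The heat kernel `H_t(x,y)` of the flow Laplacian, i.e. `(e^{−t𝓛} (δ_y/μ(y)))(x)`
computed via the exponential power series of the bounded operator `𝓛`. -/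
def Hker (t : ℝ) (x y : S.V) : ℝ :=
  ∑' n : ℕ, ((-t) ^ n / (n.factorial : ℝ)) * ((S.lapR)^[n] (S.deltaMu y)) x

/-- The integral kernel `K(x,y)` of `𝓛^{−1/2}`, by subordination. -/
def Kker (x y : S.V) : ℝ :=
  (Real.sqrt Real.pi)⁻¹ * ∫ t in Set.Ioi (0 : ℝ), S.Hker t x y * t ^ (-(1 : ℝ)/2)

/-- The Riesz transform `𝓡 = ∇𝓛^{−1/2}`, defined on finitely supported functions. -/
def riesz (f : S.V → ℂ) : S.V → ℂ :=
  fun x => ∑' y, ((S.Kker x y - S.Kker (S.pred x) y : ℝ) : ℂ) * f y * (S.wR y : ℂ)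

/-- The integral operator with almost-radial kernel `q^{−ℓ(x)/2} G(d(x,y)) q^{−ℓ(y)/2}`. -/
def kernelOp (G : ℕ → ℂ) (f : S.V → ℂ) : S.V → ℂ :=
  fun x => ∑' y, (((q : ℝ) ^ (-((S.level x : ℤ) : ℝ)/2) * (q : ℝ) ^ (-((S.level y : ℤ) : ℝ)/2) : ℝ) : ℂ)
    * G (S.dist x y) * f y * (S.wR y : ℂ)

/-- The ε-horizontal gradient `∇_ε f(x) = (1/q) Σ_{y ∈ succ(x)} ε(y) f(y)`. -/
def hgrad (ε f : S.V → ℂ) : S.V → ℂ :=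
  fun x => (q : ℂ)⁻¹ * ∑' y : {y | S.pred y = x}, ε y.1 * f y.1

/-- The adjoint ε-horizontal gradient `∇_ε* f(x) = conj(ε(x)) f(𝔭(x))`. -/
def hgradStar (ε f : S.V → ℂ) : S.V → ℂ :=
  fun x => (starRingEnd ℂ) (ε x) * f (S.pred x)

/-- `‖ε‖_∞`. -/
def epsSup (ε : S.V → ℂ) : ℝ≥0∞ := ⨆ x, (‖ε x‖₊ : ℝ≥0∞)

/-- The `L²(μ)` inner product. -/
def inner2 (f g : S.V → ℂ) : ℂ := ∑' x, f x * (starRingEnd ℂ) (g x) * (S.wR x : ℂ)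

/-- `y ≤ x` iff `d(x,y) = ℓ(x) − ℓ(y)`. -/
def le' (y x : S.V) : Prop := (S.dist x y : ℤ) = S.level x - S.level y

/-- Admissible trapezoids of `(T,μ)`. -/
def IsAdmissibleTrapezoid (F : Set S.V) : Prop :=
  (∃ x, F = {x}) ∨
  ∃ (x₀ : S.V) (h1 h2 : ℕ), 0 < h1 ∧ 2 * h1 ≤ h2 ∧ h2 ≤ 12 * h1 ∧
    F = {x | S.le' x x₀ ∧ S.level x₀ - (h2 : ℤ) < S.level x ∧ S.level x ≤ S.level x₀ - (h1 : ℤ)}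

/-- `(1,∞)`-atoms of `(T,μ)`. -/
def IsOneInftyAtom (a : S.V → ℂ) : Prop :=
  ∃ F : Set S.V, S.IsAdmissibleTrapezoid F ∧ Function.support a ⊆ F ∧
    (∑' x, a x * (S.wR x : ℂ)) = 0 ∧ ∀ x, (‖a x‖₊ : ℝ≥0∞) ≤ (S.muS F)⁻¹

end FlowTree

namespace ZRiesz

/-- The discrete Laplacian on `ℤ`. -/
def deltaZ (F : ℤ → ℝ) : ℤ → ℝ := fun n => F n - (F (n + 1) + F (n - 1)) / 2

/-- The heat kernel `h_t^ℤ = e^{−tΔ_ℤ} δ_0` on `ℤ`, via the exponential power series. -/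
def heatZ (t : ℝ) (n : ℤ) : ℝ :=
  ∑' k : ℕ, ((-t) ^ k / (k.factorial : ℝ)) *
    (deltaZ^[k] (fun m => if m = 0 then (1 : ℝ) else 0)) n

/-- Kernel of the Riesz transform on `ℤ`: `k_ℤ(n) = π^{−1/2} ∫₀^∞ (∇_ℤ h_t^ℤ)(n) t^{−1/2} dt`. -/
def kZ (n : ℤ) : ℝ :=
  (Real.sqrt Real.pi)⁻¹ * ∫ t in Set.Ioi (0 : ℝ), (heatZ t n - heatZ t (n + 1)) * t ^ (-(1 : ℝ)/2)

/-- Kernel of the skew-symmetric part: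
`k̃_ℤ(n) = π^{−1/2} ∫₀^∞ (∇̃_ℤ h_t^ℤ)(n) t^{−1/2} dt`. -/
def ktZ (n : ℤ) : ℝ :=
  (Real.sqrt Real.pi)⁻¹ *
    ∫ t in Set.Ioi (0 : ℝ), (heatZ t (n - 1) - heatZ t (n + 1)) * t ^ (-(1 : ℝ)/2)

/-- The closed formula `k̃_ℤ(m) = (2√2/π) m/(m² − 1/4)`. -/
def ktZc (m : ℤ) : ℝ := (2 * Real.sqrt 2 / Real.pi) * (m : ℝ) / ((m : ℝ) ^ 2 - 1/4)

/-- `G(n) = Σ_{k≥0} q^{−(n+2k)/2} k̃_ℤ(n+2k+1)` (subordination kernel version). -/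
def Gint (q : ℕ) (n : ℕ) : ℝ :=
  ∑' k : ℕ, (q : ℝ) ^ (-(((n : ℝ)) + 2 * (k : ℝ))/2) * ktZ ((n : ℤ) + 2 * (k : ℤ) + 1)

/-- `G(n) = Σ_{k≥0} q^{−(n+2k)/2} k̃_ℤ(n+2k+1)` (closed formula version). -/
def Gc (q : ℕ) (n : ℕ) : ℝ :=
  ∑' k : ℕ, (q : ℝ) ^ (-(((n : ℝ)) + 2 * (k : ℝ))/2) * ktZc ((n : ℤ) + 2 * (k : ℤ) + 1)

/-- The `ℓ^p(ℤ)` norm. -/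
def zlpNorm (p : ℝ≥0∞) (F : ℤ → ℂ) : ℝ≥0∞ :=
  if p = ∞ then ⨆ n, (‖F n‖₊ : ℝ≥0∞)
  else (∑' n : ℤ, (‖F n‖₊ : ℝ≥0∞) ^ p.toReal) ^ (1 / p.toReal)

/-- The `ℓ^{1,∞}(ℕ)` quasinorm. -/
def natWk (F : ℕ → ℂ) : ℝ≥0∞ :=
  ⨆ t : ℝ≥0, (t : ℝ≥0∞) * ∑' (_ : {n : ℕ | t < ‖F n‖₊}), (1 : ℝ≥0∞)

end ZRiesz

/-- The punctured boundary `Ω = ∂T \ {ω_*}` of the tree, together with the measure `ν`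
with `ν(Ω_x) = q^{ℓ(x)}`.  `vert ω n` is the vertex `ω_n` of level `n` on the geodesic
`[ω, ω_*]`. -/
structure FlowTreeBoundary {q : ℕ} (S : FlowTree q) where
  Ω : Type
  mΩ : MeasurableSpace Ω
  ν : @MeasureTheory.Measure Ω mΩ
  vert : Ω → ℤ → S.V
  level_vert : ∀ ω n, S.level (vert ω n) = n
  pred_vert : ∀ ω n, S.pred (vert ω n) = vert ω (n + 1)
  vert_surj : ∀ x : S.V, ∃ ω, vert ω (S.level x) = x
  vert_inj : ∀ ω ω', (∀ n, vert ω n = vert ω' n) → ω = ω'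
  meas_cone : ∀ x : S.V, @MeasurableSet Ω mΩ {ω | vert ω (S.level x) = x}
  nu_cone : ∀ x : S.V, ν {ω | vert ω (S.level x) = x} = (q : ℝ≥0∞) ^ ((S.level x : ℤ) : ℝ)

attribute [instance] FlowTreeBoundary.mΩ

namespace FlowTreeBoundary

variable {q : ℕ} {S : FlowTree q} (B : FlowTreeBoundary S)

/-- The product measure `ν × #` on `Ω × ℤ`. -/
def pm : MeasureTheory.Measure (B.Ω × ℤ) := B.ν.prod MeasureTheory.Measure.count

/-- `Ω_x = {ω : x ∈ [ω, ω_*]}`. -/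
def cone (x : S.V) : Set B.Ω := {ω | B.vert ω (S.level x) = x}

/-- The lifting operator `Φf(ω,n) = f(ω_n)`. -/
def lift (f : S.V → ℂ) : B.Ω × ℤ → ℂ := fun p => f (B.vert p.1 p.2)

/-- The lifting operator on `ℝ≥0∞`-valued functions. -/
def liftNN (f : S.V → ℝ≥0∞) : B.Ω × ℤ → ℝ≥0∞ := fun p => f (B.vert p.1 p.2)

/-- The adjoint `Φ*g(x) = ν(Ω_x)^{−1} ∫_{Ω_x} g(ω, ℓ(x)) dν(ω)`. -/
def liftStar (g : B.Ω × ℤ → ℂ) : S.V → ℂ :=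
  fun x => ((B.ν (B.cone x)).toReal)⁻¹ * ∫ ω in B.cone x, g (ω, S.level x) ∂B.ν

/-- The adjoint `Φ*` on `ℝ≥0∞`-valued functions. -/
def liftStarNN (g : B.Ω × ℤ → ℝ≥0∞) : S.V → ℝ≥0∞ :=
  fun x => (B.ν (B.cone x))⁻¹ * ∫⁻ ω in B.cone x, g (ω, S.level x) ∂B.ν

end FlowTreeBoundary

/-- The weak `L^{1,∞}(μ)` quasinorm with respect to a measure. -/
def wkMeas {α : Type*} [MeasurableSpace α] (μ : MeasureTheory.Measure α) (g : α → ℂ) : ℝ≥0∞ :=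
  ⨆ t : ℝ≥0, (t : ℝ≥0∞) * μ {a | t < ‖g a‖₊}

/-- The weak `L^{1,∞}(μ)` quasinorm for `ℝ≥0∞`-valued functions. -/
def wkMeasNN {α : Type*} [MeasurableSpace α] (μ : MeasureTheory.Measure α) (g : α → ℝ≥0∞) :
    ℝ≥0∞ :=
  ⨆ t : ℝ≥0, (t : ℝ≥0∞) * μ {a | (t : ℝ≥0∞) < g a}

end

noncomputable section Aux
namespace FlowTree

variable {q : ℕ} (S : FlowTree q)

lemma pred_ne (x : S.V) : S.pred x ≠ x := by
  intro h
  have h1 := S.level_pred x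
  rw [h] at h1
  omega

lemma dist_pred (x : S.V) : S.dist x (S.pred x) = 1 := by
  have hle : S.dist x (S.pred x) ≤ 1 := by
    have := S.dist_le x (S.pred x) 1 0 (by simp)
    simpa using this
  have hne : S.dist x (S.pred x) ≠ 0 := by
    intro h
    exact S.pred_ne x (S.eq_of_dist_eq_zero x (S.pred x) h).symm
  omega

lemma dist_succ {x y : S.V} (h : S.pred y = x) : S.dist x y = 1 := by
  have hle : S.dist x y ≤ 1 := by
    have := S.dist_le x y 0 1 (by simp [h])
    simpa using this
  have hne : S.dist x y ≠ 0 := by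
    intro h0
    have hxy := S.eq_of_dist_eq_zero x y h0
    subst hxy
    exact S.pred_ne x h
  omega

lemma pred_not_succ (x : S.V) : S.pred (S.pred x) ≠ x := by
  intro h
  have h1 := S.level_pred x
  have h2 := S.level_pred (S.pred x)
  rw [h] at h2
  omega

lemma nbhd_eq (x : S.V) :
    {y | S.dist x y = 1} = insert (S.pred x) {y | S.pred y = x} := by
  ext y
  simp only [Set.mem_setOf_eq, Set.mem_insert_iff]
  constructor
  · intro h
    obtain ⟨n, m, heq, hnm⟩ := S.dist_spec x y
    rw [h] at hnm
    rcases (by omega : (n = 0 ∧ m = 1) ∨ (n = 1 ∧ m = 0)) with ⟨rfl, rfl⟩ | ⟨rfl, rfl⟩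
    · right; simpa using heq.symm
    · left; simpa using heq.symm
  · rintro (rfl | h)
    · exact S.dist_pred x
    · exact S.dist_succ h

/-- The successors of `x`, as a finset. -/
def sFin (x : S.V) : Finset S.V := (S.succ_finite x).toFinset

lemma mem_sFin {x y : S.V} : y ∈ S.sFin x ↔ S.pred y = x := by
  simp [sFin, Set.Finite.mem_toFinset]

lemma pred_not_mem_sFin (x : S.V) : S.pred x ∉ S.sFin x := by
  rw [S.mem_sFin]; exact S.pred_not_succ x

lemma card_sFin (x : S.V) : (S.sFin x).card = q := by
  have h := S.succ_card x
  have h2 : Nat.card {y // S.pred y = x} = (S.sFin x).card := by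
    have h3 : Nat.card ↥{y | S.pred y = x} = (S.sFin x).card := by
      rw [Nat.card_coe_set_eq, Set.ncard_eq_toFinset_card _ (S.succ_finite x)]
      rfl
    exact h3
  omega

lemma qc_ne_zero (hq : 2 ≤ q) : (q : ℝ≥0∞) ≠ 0 :=
  Nat.cast_ne_zero.mpr (by omega)

lemma w_pred (hq : 2 ≤ q) (y : S.V) : S.w (S.pred y) = q * S.w y := by
  unfold w
  rw [S.level_pred y]
  push_cast
  rw [ENNReal.rpow_add _ _ (qc_ne_zero hq) (ENNReal.natCast_ne_top q), ENNReal.rpow_one,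
    mul_comm]

lemma Dmod_eq (f : S.V → ℂ) (x : S.V) :
    S.Dmod f x = ‖S.grad f x‖ + ∑ y ∈ S.sFin x, ‖S.grad f y‖ := by
  have hmem : ∀ y, S.dist x y = 1 ↔ y ∈ insert (S.pred x) (S.sFin x) := by
    intro y
    have := Set.ext_iff.mp (S.nbhd_eq x) y
    simpa [mem_sFin] using this
  have h1 : S.Dmod f x = ∑ y ∈ insert (S.pred x) (S.sFin x), ‖f x - f y‖ := by
    unfold Dmod
    rw [← Finset.tsum_subtype]
    exact (Equiv.subtypeEquivRight hmem).tsum_eq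
      (fun y : {y // y ∈ insert (S.pred x) (S.sFin x)} => ‖f x - f y.1‖)
  rw [h1, Finset.sum_insert (S.pred_not_mem_sFin x)]
  congr 1
  refine Finset.sum_congr rfl fun y hy => ?_
  rw [S.mem_sFin] at hy
  subst hy
  simp [grad, norm_sub_rev]

lemma Dmod_coe (f : S.V → ℂ) (x : S.V) : (‖S.Dmod f x‖₊ : ℝ≥0∞)
    = (‖S.grad f x‖₊ : ℝ≥0∞) + ∑ y ∈ S.sFin x, (‖S.grad f y‖₊ : ℝ≥0∞) := by
  rw [← enorm_eq_nnnorm, Real.enorm_eq_ofReal (by rw [Dmod_eq]; positivity), S.Dmod_eq f x,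
    ENNReal.ofReal_add (norm_nonneg _) (Finset.sum_nonneg fun _ _ => norm_nonneg _),
    ENNReal.ofReal_sum_of_nonneg (fun _ _ => norm_nonneg _)]
  congr 1
  · exact ofReal_norm_eq_enorm _
  · exact Finset.sum_congr rfl fun y _ => ofReal_norm_eq_enorm _

lemma Dmod_nnnorm (f : S.V → ℂ) (x : S.V) :
    ‖S.Dmod f x‖₊ = ‖S.grad f x‖₊ + ∑ y ∈ S.sFin x, ‖S.grad f y‖₊ := by
  have := S.Dmod_coe f x
  exact_mod_cast this

lemma lpNorm_mono {E F : Type*} [NNNorm E] [NNNorm F] (p : ℝ≥0∞)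
    (g : S.V → E) (h : S.V → F) (hle : ∀ x, ‖g x‖₊ ≤ ‖h x‖₊) :
    S.lpNorm p g ≤ S.lpNorm p h := by
  unfold lpNorm
  split_ifs
  · exact iSup_mono fun x => ENNReal.coe_le_coe.mpr (hle x)
  · refine ENNReal.rpow_le_rpow ?_ (by positivity)
    exact ENNReal.tsum_le_tsum fun x =>
      mul_le_mul_left (ENNReal.rpow_le_rpow (ENNReal.coe_le_coe.mpr (hle x))
        ENNReal.toReal_nonneg) _

lemma muS_mono {A B : Set S.V} (h : A ⊆ B) : S.muS A ≤ S.muS B := by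
  unfold muS
  rw [tsum_subtype, tsum_subtype]
  exact ENNReal.tsum_le_tsum fun x =>
    Set.indicator_le_indicator_of_subset h (fun _ => zero_le) x

lemma muS_union_le (A B : Set S.V) : S.muS (A ∪ B) ≤ S.muS A + S.muS B := by
  unfold muS
  rw [tsum_subtype, tsum_subtype, tsum_subtype, ← ENNReal.tsum_add]
  refine ENNReal.tsum_le_tsum fun x => ?_
  by_cases hA : x ∈ A <;> by_cases hB : x ∈ B <;>
    simp [Set.indicator_apply, Set.mem_union, hA, hB]

lemma muS_pred_image (hq : 2 ≤ q) (A : Set S.V) :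
    S.muS (S.pred '' A) ≤ q * S.muS A := by
  unfold muS
  have hsurj : Function.Surjective
      (fun y : A => (⟨S.pred y.1, ⟨y.1, y.2, rfl⟩⟩ : S.pred '' A)) := by
    rintro ⟨z, y, hy, rfl⟩
    exact ⟨⟨y, hy⟩, rfl⟩
  calc ∑' z : S.pred '' A, S.w z.1
      ≤ ∑' y : A, S.w (S.pred y.1) :=
        ENNReal.tsum_le_tsum_comp_of_surjective hsurj _
    _ = ∑' y : A, (q : ℝ≥0∞) * S.w y.1 := tsum_congr fun y => S.w_pred hq y.1
    _ = q * ∑' y : A, S.w y.1 := ENNReal.tsum_mul_left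

/-- Every vertex is a successor of its predecessor, in a unique way. -/
def succEquiv : (Σ x : S.V, {y // S.pred y = x}) ≃ S.V where
  toFun p := p.2.1
  invFun y := ⟨S.pred y, y, rfl⟩
  left_inv := by rintro ⟨x, y, rfl⟩; rfl
  right_inv := fun y => rfl

lemma sum_sFin_tsum (c : S.V → ℝ≥0∞) (x : S.V) :
    ∑ y ∈ S.sFin x, c y = ∑' y : {y // S.pred y = x}, c y.1 :=
  (Finset.tsum_subtype _ c).symm.trans
    ((Equiv.subtypeEquivRight (fun y => S.mem_sFin)).tsum_eq fun y => c y.1)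

lemma resum (c : S.V → ℝ≥0∞) : ∑' x, ∑ y ∈ S.sFin x, c y = ∑' y, c y := by
  calc ∑' x, ∑ y ∈ S.sFin x, c y
      = ∑' x, ∑' y : {y // S.pred y = x}, c y.1 := tsum_congr fun x => S.sum_sFin_tsum c x
    _ = ∑' p : Σ x : S.V, {y // S.pred y = x}, c p.2.1 := (ENNReal.tsum_sigma _).symm
    _ = ∑' y, c y := S.succEquiv.tsum_eq c

lemma resum_w (hq : 2 ≤ q) (c : S.V → ℝ≥0∞) :
    ∑' x, (∑ y ∈ S.sFin x, c y) * S.w x = q * ∑' y, c y * S.w y := by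
  calc ∑' x, (∑ y ∈ S.sFin x, c y) * S.w x
      = ∑' x, ∑ y ∈ S.sFin x, (fun y => (q : ℝ≥0∞) * (c y * S.w y)) y := by
        refine tsum_congr fun x => ?_
        rw [Finset.sum_mul]
        refine Finset.sum_congr rfl fun y hy => ?_
        rw [S.mem_sFin] at hy
        subst hy
        rw [S.w_pred hq y]
        ring
    _ = ∑' y, (q : ℝ≥0∞) * (c y * S.w y) := S.resum _
    _ = q * ∑' y, c y * S.w y := ENNReal.tsum_mul_left

end FlowTree

lemma rpow_sum_le_aux {ι : Type*} (s : Finset ι) (b : ι → ℝ≥0∞) {pt : ℝ} (hpt : 1 ≤ pt) :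
    (∑ i ∈ s, b i) ^ pt ≤ (s.card : ℝ≥0∞) ^ (pt - 1) * ∑ i ∈ s, b i ^ pt := by
  rcases s.eq_empty_or_nonempty with rfl | hs
  · simp [ENNReal.zero_rpow_of_pos (by linarith : (0:ℝ) < pt)]
  · have hn : ((s.card : ℝ≥0∞)) ≠ 0 := Nat.cast_ne_zero.mpr hs.card_pos.ne'
    have hn' : ((s.card : ℝ≥0∞)) ≠ ∞ := ENNReal.natCast_ne_top _
    set n : ℝ≥0∞ := (s.card : ℝ≥0∞) with hn_def
    have hw : ∑ _i ∈ s, n⁻¹ = 1 := by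
      rw [Finset.sum_const, nsmul_eq_mul]
      exact ENNReal.mul_inv_cancel hn hn'
    have key := ENNReal.rpow_arith_mean_le_arith_mean_rpow s (fun _ => n⁻¹)
      (fun i => n * b i) hw hpt
    have h1 : ∀ i, n⁻¹ * (n * b i) = b i := fun i => by
      rw [← mul_assoc, ENNReal.inv_mul_cancel hn hn', one_mul]
    have h2 : ∀ i, n⁻¹ * (n * b i) ^ pt = n ^ (pt - 1) * b i ^ pt := fun i => by
      rw [ENNReal.mul_rpow_of_nonneg _ _ (by linarith : (0:ℝ) ≤ pt), ← mul_assoc]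
      congr 1
      rw [← ENNReal.rpow_neg_one n, ← ENNReal.rpow_add _ _ hn hn']
      congr 1; ring
    calc (∑ i ∈ s, b i) ^ pt = (∑ i ∈ s, n⁻¹ * (n * b i)) ^ pt := by simp_rw [h1]
      _ ≤ ∑ i ∈ s, n⁻¹ * (n * b i) ^ pt := key
      _ = ∑ i ∈ s, n ^ (pt - 1) * b i ^ pt := by simp_rw [h2]
      _ = n ^ (pt - 1) * ∑ i ∈ s, b i ^ pt := by rw [Finset.mul_sum]

namespace FlowTree

variable {q : ℕ} (S : FlowTree q)

lemma key_pow (f : S.V → ℂ) (x : S.V) {pt : ℝ} (hpt : 1 ≤ pt) :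
    (‖S.Dmod f x‖₊ : ℝ≥0∞) ^ pt
      ≤ (1 + q : ℝ≥0∞) ^ (pt - 1) *
        ((‖S.grad f x‖₊ : ℝ≥0∞) ^ pt + ∑ y ∈ S.sFin x, (‖S.grad f y‖₊ : ℝ≥0∞) ^ pt) := by
  classical
  set F : Finset S.V := insert (S.pred x) (S.sFin x) with hF
  set h : S.V → ℝ≥0∞ := fun y =>
    if y = S.pred x then (‖S.grad f x‖₊ : ℝ≥0∞) else (‖S.grad f y‖₊ : ℝ≥0∞) with hh
  have hni := S.pred_not_mem_sFin x
  have hne : ∀ y ∈ S.sFin x, y ≠ S.pred x := fun y hy hEq => hni (hEq ▸ hy)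
  have hsum : ∑ y ∈ F, h y
      = (‖S.grad f x‖₊ : ℝ≥0∞) + ∑ y ∈ S.sFin x, (‖S.grad f y‖₊ : ℝ≥0∞) := by
    rw [hF, Finset.sum_insert hni]
    congr 1
    · simp [hh]
    · exact Finset.sum_congr rfl fun y hy => by simp [hh, hne y hy]
  have hsum' : ∑ y ∈ F, h y ^ pt
      = (‖S.grad f x‖₊ : ℝ≥0∞) ^ pt + ∑ y ∈ S.sFin x, (‖S.grad f y‖₊ : ℝ≥0∞) ^ pt := by
    rw [hF, Finset.sum_insert hni]
    congr 1
    · simp [hh]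
    · exact Finset.sum_congr rfl fun y hy => by simp [hh, hne y hy]
  have hcard : (F.card : ℝ≥0∞) = 1 + q := by
    rw [hF, Finset.card_insert_of_notMem hni, S.card_sFin]
    push_cast; ring
  calc (‖S.Dmod f x‖₊ : ℝ≥0∞) ^ pt = (∑ y ∈ F, h y) ^ pt := by rw [hsum, S.Dmod_coe]
    _ ≤ (F.card : ℝ≥0∞) ^ (pt - 1) * ∑ y ∈ F, h y ^ pt := rpow_sum_le_aux F h hpt
    _ = _ := by rw [hcard, hsum']

lemma lp_upper (hq : 2 ≤ q) (f : S.V → ℂ) {p : ℝ≥0∞} (hp : 1 ≤ p) :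
    S.lpNorm p (S.Dmod f) ≤ (1 + q : ℝ≥0∞) * S.lpNorm p (S.grad f) := by
  unfold lpNorm
  by_cases hptop : p = ∞
  · subst hptop
    simp only [if_pos rfl]
    set M := ⨆ x, (‖S.grad f x‖₊ : ℝ≥0∞) with hM
    refine iSup_le fun x => ?_
    rw [S.Dmod_coe f x]
    have h1 : (‖S.grad f x‖₊ : ℝ≥0∞) ≤ M := le_iSup (fun x => ((‖S.grad f x‖₊ : ℝ≥0∞))) x
    have h2 : ∑ y ∈ S.sFin x, (‖S.grad f y‖₊ : ℝ≥0∞) ≤ (q : ℝ≥0∞) * M := by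
      calc ∑ y ∈ S.sFin x, (‖S.grad f y‖₊ : ℝ≥0∞)
          ≤ ∑ _y ∈ S.sFin x, M :=
            Finset.sum_le_sum fun y _ => le_iSup (fun x => ((‖S.grad f x‖₊ : ℝ≥0∞))) y
        _ = (q : ℝ≥0∞) * M := by rw [Finset.sum_const, S.card_sFin, nsmul_eq_mul]
    calc (‖S.grad f x‖₊ : ℝ≥0∞) + ∑ y ∈ S.sFin x, (‖S.grad f y‖₊ : ℝ≥0∞)
        ≤ M + q * M := add_le_add h1 h2
      _ = (1 + q) * M := by ring
  · simp only [if_neg hptop]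
    have hpt : 1 ≤ p.toReal := by
      rw [← ENNReal.toReal_one]
      exact ENNReal.toReal_mono hptop hp
    set pt := p.toReal with hptdef
    have hpt0 : pt ≠ 0 := by intro h; rw [h] at hpt; linarith
    have h1q0 : (1 + q : ℝ≥0∞) ≠ 0 := by
      simp
    have h1qt : (1 + q : ℝ≥0∞) ≠ ∞ := by
      refine ENNReal.add_ne_top.mpr ⟨ENNReal.one_ne_top, ENNReal.natCast_ne_top q⟩
    set A := ∑' x, (‖S.grad f x‖₊ : ℝ≥0∞) ^ pt * S.w x with hA
    have hbound : ∑' x, (‖S.Dmod f x‖₊ : ℝ≥0∞) ^ pt * S.w x ≤ (1 + q : ℝ≥0∞) ^ pt * A := by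
      calc ∑' x, (‖S.Dmod f x‖₊ : ℝ≥0∞) ^ pt * S.w x
          ≤ ∑' x, ((1 + q : ℝ≥0∞) ^ (pt - 1) *
              ((‖S.grad f x‖₊ : ℝ≥0∞) ^ pt
                + ∑ y ∈ S.sFin x, (‖S.grad f y‖₊ : ℝ≥0∞) ^ pt)) * S.w x :=
            ENNReal.tsum_le_tsum fun x => mul_le_mul_left (S.key_pow f x hpt) _
        _ = (1 + q : ℝ≥0∞) ^ (pt - 1) *
              (∑' x, ((‖S.grad f x‖₊ : ℝ≥0∞) ^ pt * S.w x
                + (∑ y ∈ S.sFin x, (‖S.grad f y‖₊ : ℝ≥0∞) ^ pt) * S.w x)) := by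
            rw [← ENNReal.tsum_mul_left]
            refine tsum_congr fun x => ?_
            ring
        _ = (1 + q : ℝ≥0∞) ^ (pt - 1) *
              (A + ∑' x, (∑ y ∈ S.sFin x, (‖S.grad f y‖₊ : ℝ≥0∞) ^ pt) * S.w x) := by
            rw [ENNReal.tsum_add]
        _ = (1 + q : ℝ≥0∞) ^ (pt - 1) * (A + q * A) := by
            rw [S.resum_w hq (fun y => (‖S.grad f y‖₊ : ℝ≥0∞) ^ pt)]
        _ = ((1 + q : ℝ≥0∞) ^ (pt - 1) * (1 + q : ℝ≥0∞) ^ (1:ℝ)) * A := by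
            rw [ENNReal.rpow_one]; ring
        _ = (1 + q : ℝ≥0∞) ^ pt * A := by
            rw [← ENNReal.rpow_add _ _ h1q0 h1qt]
            norm_num
    calc (∑' x, (‖S.Dmod f x‖₊ : ℝ≥0∞) ^ pt * S.w x) ^ (1 / pt)
        ≤ ((1 + q : ℝ≥0∞) ^ pt * A) ^ (1 / pt) :=
          ENNReal.rpow_le_rpow hbound (by positivity)
      _ = (1 + q : ℝ≥0∞) * A ^ (1 / pt) := by
          rw [ENNReal.mul_rpow_of_nonneg _ _ (by positivity : (0:ℝ) ≤ 1 / pt),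
            ← ENNReal.rpow_mul, mul_one_div_cancel hpt0, ENNReal.rpow_one]

lemma wk_mono {E F : Type*} [NNNorm E] [NNNorm F] (g : S.V → E) (h : S.V → F)
    (hle : ∀ x, ‖g x‖₊ ≤ ‖h x‖₊) : S.wkNorm g ≤ S.wkNorm h := by
  refine iSup_mono fun t =>
    mul_le_mul_right (S.muS_mono fun x hx => lt_of_lt_of_le hx (hle x)) _

lemma wk_upper (hq : 2 ≤ q) (f : S.V → ℂ) :
    S.wkNorm (S.Dmod f) ≤ (1 + q : ℝ≥0∞) ^ 2 * S.wkNorm (S.grad f) := by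
  refine iSup_le fun t => ?_
  have hc0 : (1 + (q : ℝ≥0)) ≠ 0 := by positivity
  set t' : ℝ≥0 := t / (1 + (q : ℝ≥0)) with ht'
  set A : Set S.V := {x | t' < ‖S.grad f x‖₊} with hAdef
  have hsub : {x | t < ‖S.Dmod f x‖₊} ⊆ A ∪ S.pred '' A := by
    intro x hx
    by_contra hxn
    rw [Set.mem_union, not_or] at hxn
    obtain ⟨h1, h2⟩ := hxn
    have hy : ∀ y ∈ S.sFin x, ‖S.grad f y‖₊ ≤ t' := by
      intro y hyx
      by_contra hlt
      push_neg at hlt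
      exact h2 ⟨y, hlt, S.mem_sFin.mp hyx⟩
    have hgx : ‖S.grad f x‖₊ ≤ t' := not_lt.mp h1
    have hD : ‖S.Dmod f x‖₊ ≤ t := by
      rw [S.Dmod_nnnorm f x]
      calc ‖S.grad f x‖₊ + ∑ y ∈ S.sFin x, ‖S.grad f y‖₊
          ≤ t' + ∑ _y ∈ S.sFin x, t' := add_le_add hgx (Finset.sum_le_sum hy)
        _ = t' + q * t' := by rw [Finset.sum_const, S.card_sFin, nsmul_eq_mul]
        _ = (1 + (q : ℝ≥0)) * t' := by ring
        _ = t := by rw [ht', mul_comm, div_mul_cancel₀ _ hc0]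
    exact absurd hx (not_lt.mpr hD)
  have hNN : (1 + (q : ℝ≥0)) * t' = t := by
    rw [ht', mul_comm, div_mul_cancel₀ _ hc0]
  calc (t : ℝ≥0∞) * S.muS {x | t < ‖S.Dmod f x‖₊}
      ≤ (t : ℝ≥0∞) * (S.muS A + (q : ℝ≥0∞) * S.muS A) := by
        refine mul_le_mul_right ?_ _
        refine le_trans (S.muS_mono hsub) ?_
        refine le_trans (S.muS_union_le A _) ?_
        exact add_le_add le_rfl (S.muS_pred_image hq A)
    _ = (1 + q : ℝ≥0∞) ^ 2 * ((t' : ℝ≥0∞) * S.muS A) := by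
        rw [← hNN]
        push_cast
        ring
    _ ≤ (1 + q : ℝ≥0∞) ^ 2 * S.wkNorm (S.grad f) := by
        refine mul_le_mul_right ?_ _
        exact le_iSup (fun s : ℝ≥0 => (s : ℝ≥0∞) * S.muS {x | s < ‖S.grad f x‖₊}) t'

end FlowTree

end Aux

/-- comparability of the flow gradient `∇` and the modulus of the gradient `D`
in `L^p(μ)` for `p ∈ [1,∞]` and in `L^{1,∞}(μ)`. -/
theorem gradient_equivalence {q : ℕ} (hq : 2 ≤ q) (S : FlowTree q) (f : S.V → ℂ) :
    (∀ p : ℝ≥0∞, 1 ≤ p →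
      S.lpNorm p (S.grad f) ≤ S.lpNorm p (S.Dmod f) ∧
      S.lpNorm p (S.Dmod f) ≤ (1 + q : ℝ≥0∞) * S.lpNorm p (S.grad f)) ∧
    (S.wkNorm (S.grad f) ≤ S.wkNorm (S.Dmod f) ∧
      S.wkNorm (S.Dmod f) ≤ (1 + q : ℝ≥0∞) ^ 2 * S.wkNorm (S.grad f)) := by
  have hpoint : ∀ x, ‖S.grad f x‖₊ ≤ ‖S.Dmod f x‖₊ := fun x => by
    rw [S.Dmod_nnnorm f x]; exact le_self_add
  exact ⟨fun p hp => ⟨S.lpNorm_mono p _ _ hpoint, S.lp_upper hq f hp⟩,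
    S.wk_mono _ _ hpoint, S.wk_upper hq f⟩
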